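/- In the abstract stochastic gradient ascent setting, assume additionally that J is bounded (|J(θ)| ≤ B for all θ) and that the stepsizes satisfy the Robbins–Monro conditions α_k > 0, ∑_{k=0}^∞ α_k = ∞ and ∑_{k=0}^∞ α_k² < ∞. Then ‖∇J(θ_k)‖ → 0 almost surely as k → ∞; consequently, every almost-sure limit point of the iterate sequence (θ_k) is a stationary point of J. -/

import Mathlib

open MeasureTheory Filter Topology RealInnerProductSpace

private lemma rpg_descent {d : ℕ} {L : ℝ} (hL : 0 ≤ L) (J : EuclideanSpace ℝ (Fin d) → ℝ)
    (hJdiff : Differentiable ℝ J)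
    (hJLip : ∀ x y : EuclideanSpace ℝ (Fin d), ‖gradient J x - gradient J y‖ ≤ L * ‖x - y‖)
    (x y : EuclideanSpace ℝ (Fin d)) :
    abs (J y - J x - ⟪gradient J x, y - x⟫) ≤ L * ‖y - x‖ ^ 2 := by
  have hgradnorm : ∀ z w : EuclideanSpace ℝ (Fin d),
      ‖fderiv ℝ J z - fderiv ℝ J w‖ = ‖gradient J z - gradient J w‖ := by
    intro z w
    rw [show gradient J z - gradient J w
        = (InnerProductSpace.toDual ℝ _).symm (fderiv ℝ J z - fderiv ℝ J w) by
      simp [gradient, map_sub]]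
    rw [LinearIsometryEquiv.norm_map]
  have key := (convex_segment x y).norm_image_sub_le_of_norm_hasFDerivWithin_le'
    (f := J) (f' := fun z => fderiv ℝ J z) (φ := fderiv ℝ J x) (C := L * ‖y - x‖)
    (fun z _ => (hJdiff z).hasFDerivAt.hasFDerivWithinAt)
    (fun z hz => by
      rw [hgradnorm]
      rcases segment_eq_image' ℝ x y ▸ hz with ⟨t, ht, rfl⟩
      calc ‖gradient J (x + t • (y - x)) - gradient J x‖
          ≤ L * ‖(x + t • (y - x)) - x‖ := hJLip _ _
        _ ≤ L * ‖y - x‖ := by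
            apply mul_le_mul_of_nonneg_left _ hL
            rw [add_sub_cancel_left, norm_smul]
            rcases ht with ⟨ht0, ht1⟩
            calc ‖t‖ * ‖y - x‖ ≤ 1 * ‖y - x‖ := by
                  apply mul_le_mul_of_nonneg_right _ (norm_nonneg _)
                  rw [Real.norm_eq_abs, abs_of_nonneg ht0]; exact ht1
              _ = ‖y - x‖ := one_mul _)
    (left_mem_segment ℝ x y) (right_mem_segment ℝ x y)
  have hfd : (fderiv ℝ J x) (y - x) = ⟪gradient J x, y - x⟫ := by
    rw [gradient, InnerProductSpace.toDual_symm_apply]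
  rw [hfd] at key
  calc abs (J y - J x - ⟪gradient J x, y - x⟫) ≤ L * ‖y - x‖ * ‖y - x‖ := key
    _ = L * ‖y - x‖ ^ 2 := by ring

private lemma rpg_grad_sq_bound {d : ℕ} {L B : ℝ} (hL : 0 < L)
    (J : EuclideanSpace ℝ (Fin d) → ℝ)
    (hJdiff : Differentiable ℝ J)
    (hJLip : ∀ x y : EuclideanSpace ℝ (Fin d), ‖gradient J x - gradient J y‖ ≤ L * ‖x - y‖)
    (hJbdd : ∀ x, |J x| ≤ B) (x : EuclideanSpace ℝ (Fin d)) :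
    ‖gradient J x‖ ^ 2 ≤ 8 * L * B := by
  have h := rpg_descent hL.le J hJdiff hJLip x (x + (1/(2*L)) • gradient J x)
  rw [add_sub_cancel_left, real_inner_smul_right, real_inner_self_eq_norm_sq, norm_smul] at h
  have h1 := hJbdd x
  have h2 := hJbdd (x + (1/(2*L)) • gradient J x)
  rw [abs_le] at h h1 h2
  have hn : ‖(1/(2*L))‖ = 1/(2*L) := by rw [Real.norm_eq_abs, abs_of_pos]; positivity
  rw [hn] at h
  have key : (1/(2*L)) * ‖gradient J x‖^2 - L * ((1/(2*L)) * ‖gradient J x‖)^2 ≤ 2*B := by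
    linarith [h.1, h1.1, h2.2]
  have hL' : L ≠ 0 := ne_of_gt hL
  calc ‖gradient J x‖^2
      = (4*L) * ((1/(2*L)) * ‖gradient J x‖^2 - L * ((1/(2*L)) * ‖gradient J x‖)^2) := by
        field_simp; ring
    _ ≤ (4*L) * (2*B) := mul_le_mul_of_nonneg_left key (by positivity)
    _ = 8*L*B := by ring

private lemma rpg_det_tendsto (a α : ℕ → ℝ) (C : ℝ) (hC : 0 < C)
    (ha : ∀ k, 0 ≤ a k) (hα : ∀ k, 0 < α k)
    (hdiv : Tendsto (fun n => ∑ k ∈ Finset.range n, α k) atTop atTop)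
    (hsum : Summable (fun k => α k * a k))
    (hstep : ∀ k, |a (k+1) - a k| ≤ C * α k) :
    Tendsto a atTop (𝓝 0) := by
  rw [Metric.tendsto_atTop]
  intro ε hε
  set δ : ℝ := ε^2/(4*C) with hδdef
  have hδ : 0 < δ := by positivity
  have hcauchy : CauchySeq (fun n => ∑ k ∈ Finset.range n, α k * a k) :=
    hsum.hasSum.tendsto_sum_nat.cauchySeq
  obtain ⟨N, hN⟩ := Metric.cauchySeq_iff'.1 hcauchy δ hδ
  have htail : ∀ n, N ≤ n → ∑ k ∈ Finset.Ico N n, α k * a k < δ := by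
    intro n hn
    have := hN n hn
    rw [Real.dist_eq] at this
    rw [Finset.sum_Ico_eq_sub _ hn]
    calc ∑ k ∈ Finset.range n, α k * a k - ∑ k ∈ Finset.range N, α k * a k
        ≤ |∑ k ∈ Finset.range n, α k * a k - ∑ k ∈ Finset.range N, α k * a k| := le_abs_self _
      _ < δ := this
  have htel : ∀ n m, n ≤ m → a n - a m ≤ C * ∑ k ∈ Finset.Ico n m, α k := by
    intro n m hnm
    induction m, hnm using Nat.le_induction with
    | base => simp
    | succ m hnm ih =>
      have h1 := hstep m
      rw [abs_le] at h1
      rw [Finset.sum_Ico_succ_top hnm]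
      linarith [ih]
  refine ⟨N, fun n hn => ?_⟩
  rw [Real.dist_eq, sub_zero, abs_of_nonneg (ha n)]
  by_contra hna
  push_neg at hna
  by_cases hB : ∃ m, n ≤ m ∧ a m < ε/2
  · classical
    set m := Nat.find hB with hmdef
    obtain ⟨hnm, ham⟩ := Nat.find_spec hB
    have hmin : ∀ j, n ≤ j → j < m → ε/2 ≤ a j := by
      intro j hj hjm
      by_contra hc
      push_neg at hc
      exact Nat.find_min hB hjm ⟨hj, hc⟩
    have hdrop : ε/2 < a n - a m := by
      have : ε ≤ a n := hna
      linarith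
    have hαsum : ε/(2*C) < ∑ k ∈ Finset.Ico n m, α k := by
      have h2 := htel n m hnm
      rw [div_lt_iff₀ (by positivity : (0:ℝ) < 2*C)]
      nlinarith
    have hlow : (ε/2) * ∑ k ∈ Finset.Ico n m, α k ≤ ∑ k ∈ Finset.Ico n m, α k * a k := by
      rw [Finset.mul_sum]
      apply Finset.sum_le_sum
      intro j hj
      rw [Finset.mem_Ico] at hj
      have := hmin j hj.1 hj.2
      have := (hα j).le
      nlinarith
    have hsub : ∑ k ∈ Finset.Ico n m, α k * a k ≤ ∑ k ∈ Finset.Ico N m, α k * a k := by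
      apply Finset.sum_le_sum_of_subset_of_nonneg
      · exact Finset.Ico_subset_Ico hn le_rfl
      · intro j _ _
        exact mul_nonneg (hα j).le (ha j)
    have : δ < δ := by
      calc δ = (ε/2) * (ε/(2*C)) := by rw [hδdef]; field_simp; ring
        _ < (ε/2) * ∑ k ∈ Finset.Ico n m, α k := by
            apply mul_lt_mul_of_pos_left hαsum (by positivity)
        _ ≤ ∑ k ∈ Finset.Ico n m, α k * a k := hlow
        _ ≤ ∑ k ∈ Finset.Ico N m, α k * a k := hsub
        _ < δ := htail m (le_trans hn hnm)
    exact lt_irrefl _ this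
  · push_neg at hB
    obtain ⟨m, hXm, hnm⟩ :=
      ((tendsto_atTop.1 hdiv (2*δ/ε + 1 + ∑ k ∈ Finset.range n, α k)).and
        (eventually_ge_atTop n)).exists
    have hαsum : 2*δ/ε + 1 ≤ ∑ k ∈ Finset.Ico n m, α k := by
      rw [Finset.sum_Ico_eq_sub _ hnm]
      linarith
    have hlow : (ε/2) * ∑ k ∈ Finset.Ico n m, α k ≤ ∑ k ∈ Finset.Ico n m, α k * a k := by
      rw [Finset.mul_sum]
      apply Finset.sum_le_sum
      intro j hj
      rw [Finset.mem_Ico] at hj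
      have := hB j hj.1
      have := (hα j).le
      nlinarith
    have hsub : ∑ k ∈ Finset.Ico n m, α k * a k ≤ ∑ k ∈ Finset.Ico N m, α k * a k := by
      apply Finset.sum_le_sum_of_subset_of_nonneg
      · exact Finset.Ico_subset_Ico hn le_rfl
      · intro j _ _
        exact mul_nonneg (hα j).le (ha j)
    have hδε : δ < (ε/2) * (2*δ/ε + 1) := by
      have : (ε/2) * (2*δ/ε + 1) = δ + ε/2 := by field_simp
      rw [this]
      linarith
    have : δ < δ := by
      calc δ < (ε/2) * (2*δ/ε + 1) := hδε
        _ ≤ (ε/2) * ∑ k ∈ Finset.Ico n m, α k := by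
            apply mul_le_mul_of_nonneg_left hαsum (by positivity)
        _ ≤ ∑ k ∈ Finset.Ico n m, α k * a k := hlow
        _ ≤ ∑ k ∈ Finset.Ico N m, α k * a k := hsub
        _ < δ := htail m (le_trans hn hnm)
    exact lt_irrefl _ this

private lemma rpg_condexp_euclidean_apply {Ω : Type*} {m : MeasurableSpace Ω}
    {mΩ : MeasurableSpace Ω} {μ : Measure Ω} [IsFiniteMeasure μ] (hm : m ≤ mΩ)
    {d : ℕ} (f : Ω → EuclideanSpace ℝ (Fin d)) (hf : Integrable f μ) (i : Fin d) :
    (fun ω => (μ[f|m]) ω i) =ᵐ[μ] μ[fun ω => f ω i|m] := by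
  have hic : Integrable (μ[f|m]) μ := integrable_condExp
  have hsm : StronglyMeasurable[m] (μ[f|m]) := stronglyMeasurable_condExp
  have hfi : Integrable (fun ω => f ω i) μ := by
    have := (EuclideanSpace.proj (𝕜 := ℝ) i).integrable_comp hf
    simpa using this
  refine ae_eq_condExp_of_forall_setIntegral_eq hm hfi
    (fun s _ _ => ?_) (fun s hs hμs => ?_) ?_
  · exact (((EuclideanSpace.proj (𝕜 := ℝ) i).integrable_comp hic).congr
      (by filter_upwards with ω; simp)).integrableOn
  · have h1 : ∫ ω in s, (μ[f|m]) ω i ∂μ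
        = (EuclideanSpace.proj (𝕜 := ℝ) i) (∫ ω in s, (μ[f|m]) ω ∂μ) := by
      rw [← ContinuousLinearMap.integral_comp_comm _ hic.integrableOn]
      simp
    have h2 : ∫ ω in s, f ω i ∂μ
        = (EuclideanSpace.proj (𝕜 := ℝ) i) (∫ ω in s, f ω ∂μ) := by
      rw [← ContinuousLinearMap.integral_comp_comm _ hf.integrableOn]
      simp
    rw [h1, h2, setIntegral_condExp hm hf hs]
  · exact ((EuclideanSpace.proj (𝕜 := ℝ) i).continuous.comp_stronglyMeasurable
      hsm).aestronglyMeasurable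

private lemma rpg_coord_le_norm {d : ℕ} (x : EuclideanSpace ℝ (Fin d)) (i : Fin d) :
    |x i| ≤ ‖x‖ := by
  calc |x i| = Real.sqrt ((x i)^2) := (Real.sqrt_sq_eq_abs _).symm
    _ ≤ Real.sqrt (∑ j, ‖x j‖^2) := by
        apply Real.sqrt_le_sqrt
        have := Finset.single_le_sum (f := fun j => ‖x j‖^2)
          (fun j _ => sq_nonneg _) (Finset.mem_univ i)
        simpa [Real.norm_eq_abs, sq_abs] using this
    _ = ‖x‖ := (EuclideanSpace.norm_eq x).symm

set_option maxHeartbeats 2000000 in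
/-- In the abstract stochastic gradient ascent setting, if `J` is bounded and
the stepsizes satisfy the Robbins–Monro conditions, then `‖∇J(θ_k)‖ → 0` almost surely, and
every almost-sure limit point of the iterates is a stationary point of `J`. -/
theorem rpg_as_convergence_to_stationary_points
    {d : ℕ} (hd : 1 ≤ d)
    {Ω : Type*} {mΩ : MeasurableSpace Ω} {μ : Measure Ω} [IsProbabilityMeasure μ]
    (ℱ : Filtration ℕ mΩ)
    (L ℓ B : ℝ) (hL : 0 < L) (hℓ : 0 < ℓ)
    (J : EuclideanSpace ℝ (Fin d) → ℝ)
    (hJdiff : Differentiable ℝ J)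
    (hJLip : ∀ x y : EuclideanSpace ℝ (Fin d),
      ‖gradient J x - gradient J y‖ ≤ L * ‖x - y‖)
    (hJbdd : ∀ x, |J x| ≤ B)
    (θ g : ℕ → Ω → EuclideanSpace ℝ (Fin d))
    (x₀ : EuclideanSpace ℝ (Fin d)) (hθ0 : θ 0 = fun _ => x₀)
    (hθadapted : StronglyAdapted ℱ θ)
    (hgmeas : ∀ k, StronglyMeasurable[ℱ (k + 1)] (g k))
    (α : ℕ → ℝ)
    (hupdate : ∀ k ω, θ (k + 1) ω = θ k ω + α k • g k ω)
    (hunbiased : ∀ k, μ[g k | ℱ k] =ᵐ[μ] fun ω => gradient J (θ k ω))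
    (hgbdd : ∀ k, ∀ᵐ ω ∂μ, ‖g k ω‖ ≤ ℓ)
    (hαpos : ∀ k, 0 < α k)
    (hαdiv : Tendsto (fun n => ∑ k ∈ Finset.range n, α k) atTop atTop)
    (hαsq : Summable fun k => (α k) ^ 2) :
    ∀ᵐ ω ∂μ,
      Tendsto (fun k => ‖gradient J (θ k ω)‖) atTop (𝓝 0) ∧
      ∀ x : EuclideanSpace ℝ (Fin d),
        MapClusterPt x atTop (fun k => θ k ω) → gradient J x = 0 := by
  classical
  have hB0 : 0 ≤ B := le_trans (abs_nonneg _) (hJbdd x₀)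
  have hgradlip : LipschitzWith (Real.toNNReal L) (gradient J) := by
    apply LipschitzWith.of_dist_le_mul
    intro x y
    rw [dist_eq_norm, dist_eq_norm, Real.coe_toNNReal _ hL.le]
    exact hJLip x y
  have hgradcont : Continuous (gradient J) := hgradlip.continuous
  have hJcont : Continuous J := hJdiff.continuous
  set M : ℝ := Real.sqrt (8*L*B) with hM
  have hM0 : 0 ≤ M := Real.sqrt_nonneg _
  set G : ℕ → Ω → EuclideanSpace ℝ (Fin d) := fun n ω => gradient J (θ n ω) with hG
  set A : ℕ → Ω → ℝ := fun n ω => ‖G n ω‖^2 with hA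
  have hA_nonneg : ∀ n ω, 0 ≤ A n ω := fun n ω => sq_nonneg _
  have hA_bd : ∀ n ω, A n ω ≤ 8*L*B := fun n ω =>
    rpg_grad_sq_bound hL J hJdiff hJLip hJbdd _
  have hGn_bd : ∀ n ω, ‖G n ω‖ ≤ M := by
    intro n ω
    rw [hM, ← Real.sqrt_sq (norm_nonneg (G n ω))]
    exact Real.sqrt_le_sqrt (hA_bd n ω)
  -- measurability
  have hGsm : ∀ n, StronglyMeasurable[ℱ n] (G n) := fun n =>
    hgradcont.comp_stronglyMeasurable (hθadapted n)
  have hAsm : ∀ n, StronglyMeasurable[ℱ n] (A n) := fun n => by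
    simpa [hA, sq, Pi.mul_def] using ((hGsm n).norm.mul (hGsm n).norm)
  have hfsm : ∀ n, StronglyMeasurable[ℱ n] (fun ω => J (θ n ω)) := fun n =>
    hJcont.comp_stronglyMeasurable (hθadapted n)
  have hf_int : ∀ n, Integrable (fun ω => J (θ n ω)) μ := fun n =>
    ⟨((hfsm n).mono (ℱ.le n)).aestronglyMeasurable,
      HasFiniteIntegral.of_bounded (C := B)
        (Eventually.of_forall fun ω => by simpa [Real.norm_eq_abs] using hJbdd (θ n ω))⟩
  have hA_int : ∀ n, Integrable (A n) μ := fun n =>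
    ⟨((hAsm n).mono (ℱ.le n)).aestronglyMeasurable,
      HasFiniteIntegral.of_bounded (C := 8*L*B)
        (Eventually.of_forall fun ω => by
          rw [Real.norm_eq_abs, abs_of_nonneg (hA_nonneg n ω)]
          exact hA_bd n ω)⟩
  have hg_int : ∀ n, Integrable (g n) μ := fun n =>
    ⟨((hgmeas n).mono (ℱ.le (n+1))).aestronglyMeasurable,
      HasFiniteIntegral.of_bounded (hgbdd n)⟩
  -- processes
  set T : ℕ → ℝ := fun n => ∑ k ∈ Finset.range n, (α k)^2 with hT
  set S : ℕ → Ω → ℝ := fun n ω => ∑ k ∈ Finset.range n, α k * A k ω with hS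
  set Y : ℕ → Ω → ℝ := fun n ω => J (θ n ω) - S n ω + L*ℓ^2*T n with hY
  have hSsm : ∀ n, StronglyMeasurable[ℱ n] (S n) := by
    intro n
    apply Finset.stronglyMeasurable_fun_sum
    intro k hk
    rw [Finset.mem_range] at hk
    exact stronglyMeasurable_const.mul ((hAsm k).mono (ℱ.mono hk.le))
  have hS_nonneg : ∀ n ω, 0 ≤ S n ω := fun n ω =>
    Finset.sum_nonneg fun k _ => mul_nonneg (hαpos k).le (hA_nonneg k ω)
  have hS_bd : ∀ n ω, S n ω ≤ (∑ k ∈ Finset.range n, α k) * (8*L*B) := by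
    intro n ω
    rw [hS, Finset.sum_mul]
    apply Finset.sum_le_sum
    intro k _
    exact mul_le_mul_of_nonneg_left (hA_bd k ω) (hαpos k).le
  have hS_int : ∀ n, Integrable (S n) μ := by
    intro n
    apply integrable_finset_sum
    intro k _
    exact (hA_int k).const_mul _
  have hY_int : ∀ n, Integrable (Y n) μ := by
    intro n
    have : Integrable (fun ω => (J (θ n ω) - S n ω) + L*ℓ^2*T n) μ :=
      ((hf_int n).sub (hS_int n)).add (integrable_const _)
    exact this
  have hYadapted : StronglyAdapted ℱ Y := fun n =>
    ((hfsm n).sub (hSsm n)).add stronglyMeasurable_const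
  -- the one-step submartingale inequality
  have hYstep : ∀ n, Y n ≤ᵐ[μ] μ[Y (n+1)|ℱ n] := by
    intro n
    -- conditional expectation of the inner product term
    have hinner_eq : ∀ (x y : EuclideanSpace ℝ (Fin d)),
        (⟪x, y⟫ : ℝ) = ∑ i, x i * y i := by
      intro x y
      simp [PiLp.inner_apply, RCLike.inner_apply, starRingEnd_apply, mul_comm]
    have hgi_int : ∀ i : Fin d, Integrable (fun ω => g n ω i) μ := by
      intro i
      have := (EuclideanSpace.proj (𝕜 := ℝ) i).integrable_comp (hg_int n)
      simpa using this
    have hGism : ∀ i : Fin d, StronglyMeasurable[ℱ n] (fun ω => G n ω i) :=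
      fun i => (EuclideanSpace.proj (𝕜 := ℝ) i).continuous.comp_stronglyMeasurable (hGsm n)
    have hprod_int : ∀ i : Fin d, Integrable (fun ω => G n ω i * g n ω i) μ := by
      intro i
      refine ⟨(((hGism i).mono (ℱ.le n)).mul
        (((EuclideanSpace.proj (𝕜 := ℝ) i).continuous.comp_stronglyMeasurable
          ((hgmeas n).mono (ℱ.le (n+1)))))).aestronglyMeasurable, ?_⟩
      apply HasFiniteIntegral.of_bounded (C := M * ℓ)
      filter_upwards [hgbdd n] with ω hgω
      rw [Real.norm_eq_abs, abs_mul]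
      apply mul_le_mul _ _ (abs_nonneg _) hM0
      · exact le_trans (rpg_coord_le_norm _ i) (hGn_bd n ω)
      · exact le_trans (rpg_coord_le_norm _ i) hgω
    have hmul : ∀ i : Fin d,
        μ[fun ω => G n ω i * g n ω i|ℱ n]
          =ᵐ[μ] fun ω => G n ω i * (μ[fun ω' => g n ω' i|ℱ n]) ω := by
      intro i
      have := condExp_mul_of_stronglyMeasurable_left (μ := μ) (hGism i) (hprod_int i) (hgi_int i)
      exact this
    have hcoord : ∀ i : Fin d,
        (μ[fun ω' => g n ω' i|ℱ n]) =ᵐ[μ] fun ω => G n ω i := by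
      intro i
      refine ((rpg_condexp_euclidean_apply (ℱ.le n) (g n) (hg_int n) i).symm).trans ?_
      filter_upwards [hunbiased n] with ω hω
      rw [hG]
      simp only [hω]
    have h_i : ∀ i : Fin d,
        μ[fun ω => G n ω i * g n ω i|ℱ n] =ᵐ[μ] fun ω => G n ω i * G n ω i := by
      intro i
      refine (hmul i).trans ?_
      filter_upwards [hcoord i] with ω hω
      rw [hω]
    have hinner_int : Integrable (fun ω => (⟪G n ω, g n ω⟫ : ℝ)) μ := by
      have : (fun ω => (⟪G n ω, g n ω⟫ : ℝ)) = fun ω => ∑ i, G n ω i * g n ω i :=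
        funext fun ω => hinner_eq _ _
      rw [this]
      exact integrable_finset_sum _ fun i _ => hprod_int i
    have h_inner : μ[fun ω => (⟪G n ω, g n ω⟫ : ℝ)|ℱ n] =ᵐ[μ] A n := by
      have he : (fun ω => (⟪G n ω, g n ω⟫ : ℝ)) = ∑ i, fun ω => G n ω i * g n ω i := by
        funext ω
        rw [hinner_eq]
        simp
      rw [he]
      refine (condExp_finset_sum (fun i _ => hprod_int i) (ℱ n)).trans ?_
      have hall : ∀ᵐ ω ∂μ, ∀ i : Fin d,
          (μ[fun ω' => G n ω' i * g n ω' i|ℱ n]) ω = G n ω i * G n ω i :=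
        (ae_all_iff).2 fun i => h_i i
      filter_upwards [hall] with ω hω
      rw [Finset.sum_apply]
      rw [Finset.sum_congr rfl fun i _ => hω i]
      show ∑ i, G n ω i * G n ω i = ‖G n ω‖^2
      rw [← real_inner_self_eq_norm_sq, hinner_eq]
    -- pointwise descent inequality
    have h_ptwise : ∀ᵐ ω ∂μ,
        J (θ n ω) + (α n * ⟪G n ω, g n ω⟫ + -(L*ℓ^2*(α n)^2)) ≤ J (θ (n+1) ω) := by
      filter_upwards [hgbdd n] with ω hgω
      have hd := rpg_descent hL.le J hJdiff hJLip (θ n ω) (θ (n+1) ω)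
      have hsub : θ (n+1) ω - θ n ω = α n • g n ω := by
        rw [hupdate n ω]; exact add_sub_cancel_left _ _
      rw [hsub, real_inner_smul_right, norm_smul] at hd
      rw [abs_le] at hd
      have hb : (‖α n‖ * ‖g n ω‖)^2 ≤ (α n)^2 * ℓ^2 := by
        rw [mul_pow, Real.norm_eq_abs, sq_abs]
        apply mul_le_mul_of_nonneg_left _ (sq_nonneg _)
        exact pow_le_pow_left₀ (norm_nonneg _) hgω 2
      have := mul_le_mul_of_nonneg_left hb hL.le
      have hGeq : gradient J (θ n ω) = G n ω := rfl
      rw [hGeq] at hd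
      nlinarith [hd.1]
    -- lower function
    set low : Ω → ℝ := fun ω => J (θ n ω) + (α n * ⟪G n ω, g n ω⟫ + -(L*ℓ^2*(α n)^2)) with hlow
    have hlow_int : Integrable low μ :=
      (hf_int n).add ((hinner_int.const_mul (α n)).add (integrable_const _))
    have hcond_low : μ[low|ℱ n] =ᵐ[μ]
        fun ω => J (θ n ω) + (α n * A n ω + -(L*ℓ^2*(α n)^2)) := by
      have h1 : μ[low|ℱ n] =ᵐ[μ]
          μ[fun ω => J (θ n ω)|ℱ n] + μ[fun ω => α n * ⟪G n ω, g n ω⟫ + -(L*ℓ^2*(α n)^2)|ℱ n] :=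
        condExp_add (hf_int n) ((hinner_int.const_mul (α n)).add (integrable_const _)) (ℱ n)
      have h2 : μ[fun ω => J (θ n ω)|ℱ n] = fun ω => J (θ n ω) :=
        condExp_of_stronglyMeasurable (ℱ.le n) (hfsm n) (hf_int n)
      have h3 : μ[fun ω => α n * ⟪G n ω, g n ω⟫ + -(L*ℓ^2*(α n)^2)|ℱ n] =ᵐ[μ]
          μ[fun ω => α n * ⟪G n ω, g n ω⟫|ℱ n] + μ[fun _ => -(L*ℓ^2*(α n)^2)|ℱ n] :=
        condExp_add (hinner_int.const_mul (α n)) (integrable_const _) (ℱ n)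
      have h4 : μ[fun ω => α n * ⟪G n ω, g n ω⟫|ℱ n] =ᵐ[μ]
          fun ω => α n * (μ[fun ω' => (⟪G n ω' , g n ω'⟫ : ℝ)|ℱ n]) ω := by
        have := condExp_smul (μ := μ) (m := ℱ n) (α n) (fun ω => (⟪G n ω, g n ω⟫ : ℝ))
        simpa [Pi.smul_def, smul_eq_mul] using this
      have h5 : μ[fun _ : Ω => -(L*ℓ^2*(α n)^2)|ℱ n] = fun _ => -(L*ℓ^2*(α n)^2) :=
        condExp_const (ℱ.le n) _
      refine h1.trans ?_
      have h6 := EventuallyEq.add (EventuallyEq.refl (ae μ) (μ[fun ω => J (θ n ω)|ℱ n])) h3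
      refine h6.trans ?_
      rw [h2, h5]
      have h7 := EventuallyEq.add h4 (EventuallyEq.refl (ae μ) (fun _ : Ω => -(L*ℓ^2*(α n)^2)))
      have h8 : ∀ᵐ ω ∂μ, α n * (μ[fun ω' => (⟪G n ω', g n ω'⟫ : ℝ)|ℱ n]) ω = α n * A n ω := by
        filter_upwards [h_inner] with ω hω
        rw [hω]
      filter_upwards [h7, h8] with ω h7ω h8ω
      simp only [Pi.add_apply] at h7ω ⊢
      rw [h7ω, h8ω]
    have hmono : μ[low|ℱ n] ≤ᵐ[μ] μ[fun ω => J (θ (n+1) ω)|ℱ n] :=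
      condExp_mono hlow_int (hf_int (n+1)) h_ptwise
    -- decompose condexp of Y (n+1)
    have hdecomp : μ[Y (n+1)|ℱ n] =ᵐ[μ]
        fun ω => (μ[fun ω' => J (θ (n+1) ω')|ℱ n]) ω - S (n+1) ω + L*ℓ^2*T (n+1) := by
      have h1 : Y (n+1) = (fun ω => J (θ (n+1) ω)) + fun ω => (- S (n+1) ω + L*ℓ^2*T (n+1)) := by
        funext ω
        show J (θ (n+1) ω) - S (n+1) ω + L*ℓ^2*T (n+1)
          = J (θ (n+1) ω) + (- S (n+1) ω + L*ℓ^2*T (n+1))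
        ring
      rw [h1]
      have hint2 : Integrable (fun ω => (- S (n+1) ω + L*ℓ^2*T (n+1))) μ :=
        ((hS_int (n+1)).neg.add (integrable_const _))
      have h2 := condExp_add (μ := μ) (m := ℱ n) (hf_int (n+1)) hint2
      refine h2.trans ?_
      have h3 : μ[fun ω => (- S (n+1) ω + L*ℓ^2*T (n+1))|ℱ n]
          = fun ω => (- S (n+1) ω + L*ℓ^2*T (n+1)) := by
        apply condExp_of_stronglyMeasurable (ℱ.le n)
        · have hSn1 : StronglyMeasurable[ℱ n] (S (n+1)) := by
            apply Finset.stronglyMeasurable_fun_sum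
            intro k hk
            rw [Finset.mem_range] at hk
            exact stronglyMeasurable_const.mul ((hAsm k).mono (ℱ.mono (Nat.lt_succ_iff.1 hk)))
          exact hSn1.neg.add stronglyMeasurable_const
        · exact (hS_int (n+1)).neg.add (integrable_const _)
      rw [h3]
      filter_upwards with ω
      simp only [Pi.add_apply]
      ring
    -- combine
    filter_upwards [hdecomp, hmono, hcond_low] with ω hdω hmω hcω
    have hS1 : S (n+1) ω = S n ω + α n * A n ω := by
      rw [hS]; exact Finset.sum_range_succ _ n
    have hT1 : T (n+1) = T n + (α n)^2 := by
      rw [hT]; exact Finset.sum_range_succ _ n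
    have hYn : Y n ω = J (θ n ω) - S n ω + L*ℓ^2*T n := rfl
    rw [hYn, hdω, hS1, hT1]
    have : J (θ n ω) + (α n * A n ω + -(L*ℓ^2*(α n)^2))
        ≤ (μ[fun ω' => J (θ (n+1) ω')|ℱ n]) ω := le_trans (le_of_eq hcω.symm) hmω
    ring_nf
    ring_nf at this
    linarith
  have hsubm : Submartingale Y ℱ μ := submartingale_nat hYadapted hY_int hYstep
  -- L¹ boundedness of Y
  set Tinf : ℝ := ∑' k, (α k)^2 with hTinf
  have hT_le : ∀ n, T n ≤ Tinf := fun n =>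
    Summable.sum_le_tsum _ (fun k _ => sq_nonneg _) hαsq
  have hT_nonneg : ∀ n, 0 ≤ T n := fun n => Finset.sum_nonneg fun k _ => sq_nonneg _
  have hTinf_nonneg : 0 ≤ Tinf := tsum_nonneg fun k => sq_nonneg _
  set K : ℝ := B + L*ℓ^2*Tinf with hK
  have hK0 : 0 ≤ K := by positivity
  have hY_le : ∀ n ω, Y n ω ≤ K := by
    intro n ω
    have h1 : J (θ n ω) ≤ B := le_trans (le_abs_self _) (hJbdd _)
    have h2 : L*ℓ^2*T n ≤ L*ℓ^2*Tinf :=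
      mul_le_mul_of_nonneg_left (hT_le n) (by positivity)
    have h3 := hS_nonneg n ω
    rw [hY, hK]
    simp only
    linarith
  have hEY : ∀ n, ∫ ω, Y 0 ω ∂μ ≤ ∫ ω, Y n ω ∂μ := by
    intro n
    have h := hsubm.2.1 0 n (Nat.zero_le n)
    calc ∫ ω, Y 0 ω ∂μ ≤ ∫ ω, (μ[Y n|ℱ 0]) ω ∂μ :=
          integral_mono_ae (hY_int 0) integrable_condExp h
      _ = ∫ ω, Y n ω ∂μ := integral_condExp (ℱ.le 0)
  have habs : ∀ n, ∫ ω, |Y n ω| ∂μ ≤ 2*K - ∫ ω, Y 0 ω ∂μ := by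
    intro n
    have h1 : ∀ ω, |Y n ω| ≤ 2*K - Y n ω := by
      intro ω
      have h2 := hY_le n ω
      rcases abs_cases (Y n ω) with ⟨h, _⟩ | ⟨h, _⟩ <;> rw [h] <;> linarith
    calc ∫ ω, |Y n ω| ∂μ ≤ ∫ ω, (2*K - Y n ω) ∂μ :=
          integral_mono (hY_int n).abs ((integrable_const _).sub (hY_int n)) h1
      _ = 2*K - ∫ ω, Y n ω ∂μ := by
          rw [integral_sub (integrable_const _) (hY_int n), integral_const]
          simp
      _ ≤ 2*K - ∫ ω, Y 0 ω ∂μ := by linarith [hEY n]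
  set R : NNReal := (2*K - ∫ ω, Y 0 ω ∂μ).toNNReal with hR
  have hbdd : ∀ n, eLpNorm (Y n) 1 μ ≤ (R : ENNReal) := by
    intro n
    rw [eLpNorm_one_eq_lintegral_enorm, ← ofReal_integral_norm_eq_lintegral_enorm (hY_int n)]
    rw [show ((R : ENNReal)) = ENNReal.ofReal (2*K - ∫ ω, Y 0 ω ∂μ) from rfl]
    apply ENNReal.ofReal_le_ofReal
    simpa [Real.norm_eq_abs] using habs n
  have hconv := hsubm.ae_tendsto_limitProcess hbdd
  -- conclusion, almost surely
  filter_upwards [hconv, (ae_all_iff).2 hgbdd] with ω hconvω hgω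
  -- bounded below
  obtain ⟨c, hc⟩ := hconvω.bddBelow_range
  have hYlb : ∀ n, c ≤ Y n ω := fun n => hc ⟨n, rfl⟩
  have hSub : ∀ n, ∑ k ∈ Finset.range n, α k * A k ω ≤ B + L*ℓ^2*Tinf - c := by
    intro n
    have h1 := hYlb n
    rw [hY] at h1
    simp only at h1
    have h2 : J (θ n ω) ≤ B := le_trans (le_abs_self _) (hJbdd _)
    have h3 : L*ℓ^2*T n ≤ L*ℓ^2*Tinf :=
      mul_le_mul_of_nonneg_left (hT_le n) (by positivity)
    have : S n ω ≤ B + L*ℓ^2*Tinf - c := by linarith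
    exact this
  have hsumA : Summable (fun k => α k * A k ω) :=
    summable_of_sum_range_le (fun k => mul_nonneg (hαpos k).le (hA_nonneg k ω)) hSub
  -- step bound
  set C : ℝ := 2*M*L*ℓ + 1 with hCdef
  have hC : 0 < C := by positivity
  have hstepA : ∀ k, |A (k+1) ω - A k ω| ≤ C * α k := by
    intro k
    have h1 : |‖G (k+1) ω‖ - ‖G k ω‖| ≤ ‖G (k+1) ω - G k ω‖ := abs_norm_sub_norm_le _ _
    have h2 : ‖G (k+1) ω - G k ω‖ ≤ L * ‖θ (k+1) ω - θ k ω‖ := hJLip _ _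
    have h3 : ‖θ (k+1) ω - θ k ω‖ = α k * ‖g k ω‖ := by
      rw [hupdate k ω, add_sub_cancel_left, norm_smul, Real.norm_eq_abs,
        abs_of_pos (hαpos k)]
    have h4 : A (k+1) ω - A k ω = (‖G (k+1) ω‖ + ‖G k ω‖) * (‖G (k+1) ω‖ - ‖G k ω‖) := by
      rw [hA]; ring
    rw [h4, abs_mul]
    have h5 : |‖G (k+1) ω‖ + ‖G k ω‖| ≤ 2*M := by
      rw [abs_of_nonneg (by positivity)]
      linarith [hGn_bd (k+1) ω, hGn_bd k ω]
    have h6 : |‖G (k+1) ω‖ - ‖G k ω‖| ≤ L * (α k * ℓ) := by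
      refine le_trans h1 (le_trans h2 ?_)
      rw [h3]
      apply mul_le_mul_of_nonneg_left _ hL.le
      exact mul_le_mul_of_nonneg_left (hgω k) (hαpos k).le
    calc |‖G (k+1) ω‖ + ‖G k ω‖| * |‖G (k+1) ω‖ - ‖G k ω‖|
        ≤ (2*M) * (L * (α k * ℓ)) :=
          mul_le_mul h5 h6 (abs_nonneg _) (by positivity)
      _ ≤ C * α k := by
          rw [hCdef]
          nlinarith [(hαpos k).le, hM0, hL.le, hℓ.le]
  have hAtend : Tendsto (fun k => A k ω) atTop (𝓝 0) :=
    rpg_det_tendsto (fun k => A k ω) α C hC (fun k => hA_nonneg k ω) hαpos hαdiv hsumA hstepA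
  have hGtend : Tendsto (fun k => ‖G k ω‖) atTop (𝓝 0) := by
    have h1 : Tendsto (fun k => Real.sqrt (A k ω)) atTop (𝓝 (Real.sqrt 0)) :=
      (Real.continuous_sqrt.tendsto 0).comp hAtend
    rw [Real.sqrt_zero] at h1
    exact h1.congr fun k => by rw [hA]; exact Real.sqrt_sq (norm_nonneg _)
  refine ⟨hGtend, ?_⟩
  intro x hx
  rw [← norm_eq_zero]
  have hle : ∀ ε, 0 < ε → ‖gradient J x‖ ≤ ε := by
    intro ε hε
    have hev : ∀ᶠ k in atTop, ‖G k ω‖ < ε/2 :=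
      hGtend.eventually_lt_const (by linarith)
    have hfreq : ∃ᶠ k in atTop, θ k ω ∈ Metric.ball x (ε/(2*L)) :=
      mapClusterPt_iff_frequently.1 hx _ (Metric.ball_mem_nhds x (by positivity))
    obtain ⟨k, hk1, hk2⟩ := (hfreq.and_eventually hev).exists
    rw [Metric.mem_ball] at hk1
    have h1 : ‖gradient J x - G k ω‖ ≤ L * ‖x - θ k ω‖ := hJLip _ _
    have h2 : ‖x - θ k ω‖ < ε/(2*L) := by
      rw [← dist_eq_norm, dist_comm]
      exact hk1
    calc ‖gradient J x‖ = ‖(gradient J x - G k ω) + G k ω‖ := by rw [sub_add_cancel]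
      _ ≤ ‖gradient J x - G k ω‖ + ‖G k ω‖ := norm_add_le _ _
      _ ≤ L * ‖x - θ k ω‖ + ‖G k ω‖ := by linarith
      _ ≤ L * (ε/(2*L)) + ε/2 := by
          have := mul_le_mul_of_nonneg_left h2.le hL.le
          linarith
      _ = ε := by
          have hL0 : L ≠ 0 := ne_of_gt hL
          field_simp
          ring
  have : ‖gradient J x‖ ≤ 0 :=
    le_of_forall_pos_le_add fun ε hε => by simpa using hle ε hε
  exact le_antisymm this (norm_nonneg _)
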